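/- Let L ≥ 0, p₁ ∈ [0,1], and let f : ℝ → (-∞,∞] be a non-decreasing convex function with f(0) = 0, f(p) ≥ ℓ_L(p) for every p ≥ p₁, and f(p) ≤ ℓ_L(p) for every p ≤ p₁. Set q₁ := L/p₁ if p₁ > 0 and q₁ := 0 otherwise. Then for every q ≥ 0: (f ∨ ℓ_L)^♯(q) = p₁·max(q − q₁, 0) if q ≤ D⁺f(p₁), and (f ∨ ℓ_L)^♯(q) = f^♯(q) if q > D⁺f(p₁) (when D⁺f(p₁) = +∞ the first formula holds for all q ≥ 0). Moreover (f ∨ ℓ_L)^♯ is a closed proper convex function; in particular it is continuous at q = D⁺f(p₁) whenever 0 < D⁺f(p₁) < +∞. -/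

import Mathlib

open scoped Classical
noncomputable section

/-- Fenchel conjugate (Legendre transform) of an extended-real-valued function:
`fconj f q = sup_{p ∈ ℝ} (p*q - f p)`. -/
def fconj (f : ℝ → EReal) (q : ℝ) : EReal := ⨆ p : ℝ, ((p * q : ℝ) : EReal) - f p

/-- Convexity for extended-real-valued functions on `ℝ`. -/
def ConvexE (f : ℝ → EReal) : Prop :=
  ∀ x y t : ℝ, 0 ≤ t → t ≤ 1 →
    f (t * x + (1 - t) * y) ≤ (t : EReal) * f x + ((1 - t : ℝ) : EReal) * f y

/-- The payoff function `ℓ_L`: `0` for `p ≤ 0`, `L` for `0 < p ≤ 1`, `+∞` for `p > 1`. -/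
def ellL (L : ℝ) (p : ℝ) : EReal :=
  if p ≤ 0 then 0 else if p ≤ 1 then (L : EReal) else ⊤

/-- Right derivative (as an extended real) of `f` at `p`, i.e. the infimum of the
right slopes `(f (p+h) - f p)/h` over `h > 0`. -/
def rightDE (f : ℝ → EReal) (p : ℝ) : EReal :=
  ⨅ h : {h : ℝ // 0 < h}, ((h.1⁻¹ : ℝ) : EReal) * (f (p + h.1) - f p)

/-- Left derivative (as an extended real) of `f` at `p`, i.e. the supremum of the
left slopes `(f p - f (p-h))/h` over `h > 0`. -/
def leftDE (f : ℝ → EReal) (p : ℝ) : EReal :=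
  ⨆ h : {h : ℝ // 0 < h}, ((h.1⁻¹ : ℝ) : EReal) * (f p - f (p - h.1))

/-- Closed convex envelope of `f`: the pointwise supremum of all lower semicontinuous
convex minorants of `f` (the largest closed convex function majorized by `f`). -/
def coE (f : ℝ → EReal) (p : ℝ) : EReal :=
  ⨆ g : {g : ℝ → EReal // ConvexE g ∧ LowerSemicontinuous g ∧ ∀ x, g x ≤ f x}, g.1 p

/-- Subdifferential of an extended-real-valued function at a point. -/
def subdiffE (f : ℝ → EReal) (p : ℝ) : Set ℝ :=
  {q : ℝ | ∀ r : ℝ, f p + ((q * (r - p) : ℝ) : EReal) ≤ f r}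


lemma fconj_convexE' (f : ℝ → EReal) : ConvexE (fconj f) := by
  intro x y t ht ht1
  show (⨆ p : ℝ, ((p * (t * x + (1 - t) * y) : ℝ) : EReal) - f p) ≤ _
  refine iSup_le fun p => ?_
  have key : ((p * (t * x + (1 - t) * y) : ℝ) : EReal) - f p ≤
      (t : EReal) * (((p * x : ℝ) : EReal) - f p)
        + ((1 - t : ℝ) : EReal) * (((p * y : ℝ) : EReal) - f p) := by
    induction f p using EReal.rec with
    | bot =>
      have hs : ∀ z : ℝ, (z : EReal) - ⊥ = ⊤ := fun z => by simp
      rw [hs, hs, hs]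
      rcases eq_or_lt_of_le ht with h | h
      · rw [← h]; norm_num
      · rw [EReal.coe_mul_top_of_pos h, EReal.top_add_of_ne_bot]
        rcases eq_or_lt_of_le ht1 with h1 | h1
        · rw [h1]; norm_num
        · rw [EReal.coe_mul_top_of_pos (by exact_mod_cast sub_pos.mpr h1)]
          exact top_ne_bot
    | coe r =>
      refine le_of_eq ?_
      rw [← EReal.coe_sub, ← EReal.coe_sub, ← EReal.coe_sub, ← EReal.coe_mul,
        ← EReal.coe_mul, ← EReal.coe_add, EReal.coe_eq_coe_iff]
      ring
    | top =>
      have hs : ∀ z : ℝ, (z : EReal) - ⊤ = ⊥ := fun z => by simp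
      rw [hs]
      exact bot_le
  refine key.trans (add_le_add ?_ ?_)
  · exact mul_le_mul_of_nonneg_left (le_iSup (fun p' : ℝ => ((p' * x : ℝ) : EReal) - f p') p)
      (by exact_mod_cast ht)
  · exact mul_le_mul_of_nonneg_left (le_iSup (fun p' : ℝ => ((p' * y : ℝ) : EReal) - f p') p)
      (by exact_mod_cast sub_nonneg.mpr ht1)

lemma fconj_lsc' (f : ℝ → EReal) : LowerSemicontinuous (fconj f) := by
  have h : ∀ p : ℝ, LowerSemicontinuous fun q : ℝ => ((p * q : ℝ) : EReal) - f p := by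
    intro p
    induction f p using EReal.rec with
    | bot => simpa only [EReal.coe_sub_bot] using (lowerSemicontinuous_const : LowerSemicontinuous fun _ : ℝ => (⊤ : EReal))
    | coe r =>
      have hc : Continuous fun q : ℝ => ((p * q - r : ℝ) : EReal) :=
        continuous_coe_real_ereal.comp (by continuity)
      have := hc.lowerSemicontinuous
      simpa [EReal.coe_sub] using this
    | top => simpa using (lowerSemicontinuous_const : LowerSemicontinuous fun _ : ℝ => (⊥ : EReal))
  exact lowerSemicontinuous_iSup h

/-- **Lemma 3.1(b)**: under the stated hypotheses on `f`, for `q ≥ 0` the conjugate of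
`f ∨ ℓ_L` equals `p₁·(q - q₁)⁺` for `q ≤ D⁺f(p₁)` and `f^♯(q)` for `q > D⁺f(p₁)`
(when `D⁺f(p₁) = +∞` the first formula holds for all `q ≥ 0`); moreover
`(f ∨ ℓ_L)^♯` is a closed proper convex function, continuous at `D⁺f(p₁)` whenever
`0 < D⁺f(p₁) < +∞`. -/
theorem conj_max_ellL_formula
    (L : ℝ) (hL : 0 ≤ L) (p₁ : ℝ) (hp₁0 : 0 ≤ p₁) (hp₁1 : p₁ ≤ 1)
    (f : ℝ → EReal) (hfbot : ∀ p, f p ≠ ⊥) (hmono : Monotone f) (hconv : ConvexE f)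
    (hf0 : f 0 = 0)
    (hge : ∀ p : ℝ, p₁ ≤ p → ellL L p ≤ f p)
    (hle : ∀ p : ℝ, p ≤ p₁ → f p ≤ ellL L p)
    (q₁ : ℝ) (hq₁ : q₁ = if 0 < p₁ then L / p₁ else 0) :
    (∀ q : ℝ, 0 ≤ q →
      ((q : EReal) ≤ rightDE f p₁ →
        fconj (fun p => max (f p) (ellL L p)) q = ((p₁ * max (q - q₁) 0 : ℝ) : EReal)) ∧
      (rightDE f p₁ < (q : EReal) →
        fconj (fun p => max (f p) (ellL L p)) q = fconj f q)) ∧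
    ConvexE (fconj (fun p => max (f p) (ellL L p))) ∧
    LowerSemicontinuous (fconj (fun p => max (f p) (ellL L p))) ∧
    (∀ q : ℝ, fconj (fun p => max (f p) (ellL L p)) q ≠ ⊥) ∧
    (∃ q : ℝ, fconj (fun p => max (f p) (ellL L p)) q ≠ ⊤) ∧
    (∀ c : ℝ, 0 < c → rightDE f p₁ = (c : EReal) →
      ContinuousAt (fconj (fun p => max (f p) (ellL L p))) c) := by
  set g : ℝ → EReal := fun p => max (f p) (ellL L p) with hgdef
  have hell0 : ∀ p : ℝ, p ≤ 0 → ellL L p = 0 := fun p hp => if_pos hp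
  have hellLeq : ∀ p : ℝ, 0 < p → p ≤ 1 → ellL L p = (L : EReal) := by
    intro p h0 h1; unfold ellL; rw [if_neg (not_le.mpr h0), if_pos h1]
  have helltop : ∀ p : ℝ, 1 < p → ellL L p = ⊤ := by
    intro p h1; unfold ellL
    rw [if_neg (not_le.mpr (by linarith)), if_neg (not_le.mpr h1)]
  have hellnn : ∀ p : ℝ, 0 ≤ ellL L p := by
    intro p; unfold ellL; split_ifs with h1 h2
    · exact le_refl 0
    · exact_mod_cast hL
    · exact le_top
  have hgnn : ∀ p, 0 ≤ g p := fun p => le_trans (hellnn p) (le_max_right _ _)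
  have hg0 : g 0 = 0 := by
    rw [hgdef]; simp only; rw [hf0, hell0 0 le_rfl, max_self]
  set c₁ : ℝ := if 0 < p₁ then L else 0 with hc₁
  have hc₁nn : 0 ≤ c₁ := by rw [hc₁]; split_ifs; exacts [hL, le_rfl]
  have hellp₁ : ellL L p₁ = (c₁ : EReal) := by
    rw [hc₁]; split_ifs with h
    · exact hellLeq p₁ h hp₁1
    · have hp0 : p₁ = 0 := le_antisymm (not_lt.mp h) hp₁0
      rw [hp0, hell0 0 le_rfl, EReal.coe_zero]
  have hfp₁ : f p₁ = (c₁ : EReal) := by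
    have h1 := hle p₁ le_rfl
    have h2 := hge p₁ le_rfl
    rw [hellp₁] at h1 h2
    exact le_antisymm h1 h2
  have hgp₁ : g p₁ = (c₁ : EReal) := by
    rw [hgdef]; simp only; rw [hfp₁, hellp₁, max_self]
  have hF0 : ∀ q : ℝ, (0 : EReal) ≤ fconj g q := by
    intro q
    show (0 : EReal) ≤ ⨆ p : ℝ, ((p * q : ℝ) : EReal) - g p
    refine le_iSup_of_le 0 ?_
    rw [hg0]
    norm_num
  have hFnb : ∀ q : ℝ, fconj g q ≠ ⊥ := by
    intro q hb
    have := hF0 q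
    rw [hb] at this
    exact absurd this (by simp)
  have hFtop : ∀ q : ℝ, 0 ≤ q → fconj g q ≤ (q : EReal) := by
    intro q hq
    show (⨆ p : ℝ, ((p * q : ℝ) : EReal) - g p) ≤ _
    refine iSup_le fun p => ?_
    rcases le_or_gt p 1 with hp | hp
    · have h1 : ((p * q : ℝ) : EReal) - g p ≤ ((p * q : ℝ) : EReal) - 0 :=
        EReal.sub_le_sub le_rfl (hgnn p)
      rw [sub_zero] at h1
      exact h1.trans (EReal.coe_le_coe_iff.mpr (by nlinarith))
    · have hgt : g p = ⊤ := top_le_iff.mp ((helltop p hp) ▸ le_max_right (f p) (ellL L p))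
      rw [hgt]
      simp
  have hslopege : ∀ q : ℝ, (q : EReal) ≤ rightDE f p₁ → ∀ h : ℝ, 0 < h →
      ((c₁ + q * h : ℝ) : EReal) ≤ f (p₁ + h) := by
    intro q hq h hh
    have h1 : rightDE f p₁ ≤ ((h⁻¹ : ℝ) : EReal) * (f (p₁ + h) - f p₁) :=
      iInf_le (fun h' : {h' : ℝ // 0 < h'} =>
        ((h'.1⁻¹ : ℝ) : EReal) * (f (p₁ + h'.1) - f p₁)) ⟨h, hh⟩
    by_cases htop : f (p₁ + h) = ⊤
    · rw [htop]; exact le_top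
    · obtain ⟨d, hd⟩ : ∃ d : ℝ, f (p₁ + h) = (d : EReal) :=
        ⟨(f (p₁ + h)).toReal, (EReal.coe_toReal htop (hfbot _)).symm⟩
      rw [hd] at h1 ⊢
      rw [hfp₁, ← EReal.coe_sub, ← EReal.coe_mul] at h1
      have h2 : q ≤ h⁻¹ * (d - c₁) := EReal.coe_le_coe_iff.mp (hq.trans h1)
      rw [EReal.coe_le_coe_iff]
      rw [inv_mul_eq_div, le_div_iff₀ hh] at h2
      linarith
  have hleft : ∀ q : ℝ, rightDE f p₁ < (q : EReal) → ∀ p : ℝ, p < p₁ →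
      ((p * q : ℝ) : EReal) - f p ≤ ((p₁ * q - c₁ : ℝ) : EReal) := by
    intro q hq p hp
    have hfpne : f p ≠ ⊤ := by
      intro ht
      have h1 : f p ≤ ellL L p := hle p hp.le
      rw [ht] at h1
      have h2 : ellL L p = ⊤ := top_le_iff.mp h1
      unfold ellL at h2
      split_ifs at h2 with ha hb
      · exact absurd h2 (by simp)
      · exact EReal.coe_ne_top L h2
      · push_neg at hb; linarith
    obtain ⟨a, ha⟩ : ∃ a : ℝ, f p = (a : EReal) :=
      ⟨(f p).toReal, (EReal.coe_toReal hfpne (hfbot p)).symm⟩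
    obtain ⟨⟨h, hh⟩, hsl⟩ := iInf_lt_iff.mp
      (show (⨅ h' : {h' : ℝ // 0 < h'},
        ((h'.1⁻¹ : ℝ) : EReal) * (f (p₁ + h'.1) - f p₁)) < (q : EReal) from hq)
    have htop : f (p₁ + h) ≠ ⊤ := by
      intro ht
      rw [ht, hfp₁, EReal.top_sub_coe, EReal.coe_mul_top_of_pos (by positivity)] at hsl
      exact absurd hsl (by simp)
    obtain ⟨d, hd⟩ : ∃ d : ℝ, f (p₁ + h) = (d : EReal) :=
      ⟨(f (p₁ + h)).toReal, (EReal.coe_toReal htop (hfbot _)).symm⟩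
    rw [hd, hfp₁, ← EReal.coe_sub, ← EReal.coe_mul, EReal.coe_lt_coe_iff] at hsl
    have e2 : d - c₁ < q * h := by
      rw [inv_mul_eq_div, div_lt_iff₀ hh] at hsl; linarith
    have hden : (0 : ℝ) < (p₁ - p) + h := by linarith
    set t : ℝ := h / ((p₁ - p) + h) with htdef
    have ht0 : 0 ≤ t := div_nonneg hh.le hden.le
    have ht1 : t ≤ 1 := by rw [div_le_one hden]; linarith
    have hcomb : t * p + (1 - t) * (p₁ + h) = p₁ := by
      rw [htdef]; field_simp; ring
    have e1 := hconv p (p₁ + h) t ht0 ht1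
    rw [hcomb, ha, hd, hfp₁, ← EReal.coe_mul, ← EReal.coe_mul, ← EReal.coe_add,
      EReal.coe_le_coe_iff] at e1
    have h3 : t * ((p₁ - p) + h) = h := by rw [htdef]; field_simp
    have h4 : (1 - t) * ((p₁ - p) + h) = p₁ - p := by rw [htdef]; field_simp; ring
    have e1' : c₁ * ((p₁ - p) + h) ≤ h * a + (p₁ - p) * d := by
      calc c₁ * ((p₁ - p) + h) ≤ (t * a + (1 - t) * d) * ((p₁ - p) + h) :=
            mul_le_mul_of_nonneg_right e1 hden.le
        _ = a * (t * ((p₁ - p) + h)) + d * ((1 - t) * ((p₁ - p) + h)) := by ring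
        _ = h * a + (p₁ - p) * d := by rw [h3, h4]; ring
    have e3 : h * (c₁ - a) ≤ (p₁ - p) * (d - c₁) := by nlinarith
    have e4 : (p₁ - p) * (d - c₁) ≤ (p₁ - p) * (q * h) :=
      mul_le_mul_of_nonneg_left e2.le (by linarith)
    have e5 : c₁ - a ≤ (p₁ - p) * q :=
      le_of_mul_le_mul_right (by nlinarith) hh
    rw [ha, ← EReal.coe_sub, EReal.coe_le_coe_iff]
    nlinarith
  refine ⟨?_, fconj_convexE' g, fconj_lsc' g, hFnb, ⟨0, fun ht =>
    absurd (ht ▸ hFtop 0 le_rfl) (by simp)⟩, ?_⟩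
  · intro q hq0
    have hub : p₁ * q - c₁ ≤ p₁ * max (q - q₁) 0 := by
      rw [hc₁, hq₁]; split_ifs with h
      · have hne : p₁ ≠ 0 := ne_of_gt h
        have heq : p₁ * (q - L / p₁) = p₁ * q - L := by field_simp
        calc p₁ * q - L = p₁ * (q - L / p₁) := heq.symm
          _ ≤ p₁ * max (q - L / p₁) 0 := mul_le_mul_of_nonneg_left (le_max_left _ _) hp₁0
      · have hp0 : p₁ = 0 := le_antisymm (not_lt.mp h) hp₁0
        simp [hp0]
    constructor
    · intro hq
      refine le_antisymm ?_ ?_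
      · show (⨆ p : ℝ, ((p * q : ℝ) : EReal) - g p) ≤ _
        refine iSup_le fun p => ?_
        rcases le_or_gt p 0 with hp | hp
        · have h1 : ((p * q : ℝ) : EReal) - g p ≤ ((p * q : ℝ) : EReal) - 0 :=
            EReal.sub_le_sub le_rfl (hgnn p)
          rw [sub_zero] at h1
          refine h1.trans (EReal.coe_le_coe_iff.mpr ?_)
          nlinarith [mul_nonneg hp₁0 (le_max_right (q - q₁) 0)]
        rcases le_or_gt p p₁ with hpp | hpp
        · have hpl : (L : EReal) ≤ g p :=
            (hellLeq p hp (le_trans hpp hp₁1)) ▸ le_max_right (f p) (ellL L p)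
          have h2 : ((p * q : ℝ) : EReal) - g p ≤ ((p * q - L : ℝ) : EReal) := by
            rw [EReal.coe_sub]
            exact EReal.sub_le_sub le_rfl hpl
          refine h2.trans (EReal.coe_le_coe_iff.mpr ?_)
          have hcL : c₁ = L := by rw [hc₁, if_pos (lt_of_lt_of_le hp hpp)]
          nlinarith [mul_le_mul_of_nonneg_right hpp hq0]
        · have hfb := hslopege q hq (p - p₁) (by linarith)
          have hp' : p₁ + (p - p₁) = p := by ring
          rw [hp'] at hfb
          have hgb : ((c₁ + q * (p - p₁) : ℝ) : EReal) ≤ g p :=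
            le_trans hfb (le_max_left _ _)
          have h2 : ((p * q : ℝ) : EReal) - g p ≤
              ((p * q - (c₁ + q * (p - p₁)) : ℝ) : EReal) := by
            rw [EReal.coe_sub]
            exact EReal.sub_le_sub le_rfl hgb
          refine h2.trans (EReal.coe_le_coe_iff.mpr ?_)
          nlinarith
      · rcases le_total (q - q₁) 0 with h | h
        · rw [max_eq_right h, mul_zero, EReal.coe_zero]
          exact hF0 q
        · rw [max_eq_left h]
          show _ ≤ ⨆ p : ℝ, ((p * q : ℝ) : EReal) - g p
          refine le_iSup_of_le p₁ ?_
          rw [hgp₁, ← EReal.coe_sub, EReal.coe_le_coe_iff]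
          rw [hq₁, hc₁]; split_ifs with hh
          · have hne : p₁ ≠ 0 := ne_of_gt hh
            have : p₁ * (q - L / p₁) = p₁ * q - L := by field_simp
            linarith
          · have hp0 : p₁ = 0 := le_antisymm (not_lt.mp hh) hp₁0
            simp [hp0]
    · intro hq
      refine le_antisymm ?_ ?_
      · show (⨆ p : ℝ, ((p * q : ℝ) : EReal) - g p) ≤
          ⨆ p : ℝ, ((p * q : ℝ) : EReal) - f p
        refine iSup_le fun p => ?_
        refine le_iSup_of_le p ?_
        exact EReal.sub_le_sub le_rfl (le_max_left _ _)
      · show (⨆ p : ℝ, ((p * q : ℝ) : EReal) - f p) ≤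
          ⨆ p : ℝ, ((p * q : ℝ) : EReal) - g p
        refine iSup_le fun p => ?_
        rcases le_or_gt p₁ p with hpp | hpp
        · refine le_iSup_of_le p ?_
          have hgf : g p = f p := max_eq_left (hge p hpp)
          rw [hgf]
        · refine le_trans (hleft q hq p hpp) (le_iSup_of_le p₁ ?_)
          rw [hgp₁, ← EReal.coe_sub]
  · intro c hc _
    have hfin : ∀ q : ℝ, 0 ≤ q → fconj g q = (((fconj g q).toReal : ℝ) : EReal) := by
      intro q hq
      have h2 : fconj g q ≠ ⊤ :=
        fun ht => absurd (ht ▸ hFtop q hq) (by simp)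
      exact (EReal.coe_toReal h2 (hFnb q)).symm
    set φ : ℝ → ℝ := fun q => (fconj g q).toReal with hφ
    have hφconv : ConvexOn ℝ (Set.Ioi (0 : ℝ)) φ := by
      refine ⟨convex_Ioi 0, ?_⟩
      intro x hx y hy a b ha hb hab
      have hx0 : (0 : ℝ) < x := hx
      have hy0 : (0 : ℝ) < y := hy
      have hz : (0 : ℝ) < a * x + b * y := by
        by_cases hb0 : b = 0
        · have ha1 : a = 1 := by linarith
          rw [hb0, ha1]; simpa using hx0
        · have hbpos : 0 < b := lt_of_le_of_ne hb (Ne.symm hb0)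
          nlinarith [mul_nonneg ha hx0.le, mul_pos hbpos hy0]
      have hcv := fconj_convexE' g x y a ha (by linarith)
      rw [show (1 - a : ℝ) = b from by linarith] at hcv
      rw [hfin (a * x + b * y) hz.le, hfin x hx0.le, hfin y hy0.le] at hcv
      rw [← EReal.coe_mul, ← EReal.coe_mul, ← EReal.coe_add, EReal.coe_le_coe_iff] at hcv
      simpa [hφ, smul_eq_mul] using hcv
    have hφcont : ContinuousOn φ (Set.Ioi 0) := ConvexOn.continuousOn isOpen_Ioi hφconv
    have hφc : ContinuousAt φ c := hφcont.continuousAt (Ioi_mem_nhds hc)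
    have hcc : ContinuousAt (fun q : ℝ => ((φ q : ℝ) : EReal)) c :=
      continuous_coe_real_ereal.continuousAt.comp hφc
    refine hcc.congr ?_
    filter_upwards [Ioi_mem_nhds hc] with q hq
    exact (hfin q (le_of_lt hq)).symm
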